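/- Let n ≥ 2 and let Q be an n×n quaternion Hermitian matrix. Let k ≠ l be indices with |Q_{kl}| = max_{i≠j} |Q_{ij}| and let J be an n×n unitary quaternion matrix that agrees with the identity outside the {k,l} block (J_{ii} = 1 for i ∉ {k,l} and J_{ij} = 0 for every off-diagonal position (i,j) other than (k,l) and (l,k) with {i,j} ≠ {k,l}). Suppose P = Jᴴ Q J satisfies P_{kl} = P_{lk} = 0. Then N(P) = N(Q) − |Q_{kl}|² − |Q_{lk}|² ≤ (1 − 2/(n(n−1))) N(Q), where N(A) := Σ_{i≠j} |A_{ij}|². -/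

import Mathlib

open Matrix

noncomputable section

/-- The off-diagonal squared Frobenius sum `N(A) = Σ_{i≠j} |A_ij|²` of a quaternion matrix. -/
noncomputable def Nq {n : ℕ} (A : Matrix (Fin n) (Fin n) (Quaternion ℝ)) : ℝ :=
  ∑ i, ∑ j, if i ≠ j then ‖A i j‖ ^ 2 else 0

namespace NqAux

lemma re_mul_comm (a b : Quaternion ℝ) : (a * b).re = (b * a).re := by
  simp only [Quaternion.re_mul]; ring

lemma norm_sq_re (a : Quaternion ℝ) : ‖a‖ ^ 2 = (star a * a).re := by
  rw [sq, ← Quaternion.normSq_eq_norm_mul_self, Quaternion.star_mul_self]; rfl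

lemma re_sum {α : Type*} (s : Finset α) (f : α → Quaternion ℝ) :
    (∑ i ∈ s, f i).re = ∑ i ∈ s, (f i).re :=
  map_sum (QuaternionAlgebra.reₗ (-1 : ℝ) 0 (-1)) f s

/-- The full squared Frobenius sum. -/
def frob {ι : Type*} [Fintype ι] (A : Matrix ι ι (Quaternion ℝ)) : ℝ :=
  ∑ i, ∑ j, ‖A i j‖ ^ 2

lemma rtrace_comm {ι : Type*} [Fintype ι] [DecidableEq ι]
    (A B : Matrix ι ι (Quaternion ℝ)) :
    (trace (A * B)).re = (trace (B * A)).re := by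
  simp only [trace, diag, mul_apply, re_sum]
  rw [Finset.sum_comm]
  exact Finset.sum_congr rfl fun i _ => Finset.sum_congr rfl fun j _ => re_mul_comm _ _

lemma frob_eq {ι : Type*} [Fintype ι] [DecidableEq ι] (A : Matrix ι ι (Quaternion ℝ)) :
    frob A = (trace (Aᴴ * A)).re := by
  simp only [trace, diag, mul_apply, re_sum, frob, conjTranspose_apply]
  rw [Finset.sum_comm]
  exact Finset.sum_congr rfl fun i _ => Finset.sum_congr rfl fun j _ => norm_sq_re _

lemma frob_conj {ι : Type*} [Fintype ι] [DecidableEq ι]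
    (V A : Matrix ι ι (Quaternion ℝ)) (hV : V * Vᴴ = 1) :
    frob (Vᴴ * A * V) = frob A := by
  have h1 : (Vᴴ * A * V)ᴴ * (Vᴴ * A * V) = Vᴴ * (Aᴴ * A * V) := by
    calc (Vᴴ * A * V)ᴴ * (Vᴴ * A * V)
        = Vᴴ * Aᴴ * (V * Vᴴ) * (A * V) := by
          simp only [conjTranspose_mul, conjTranspose_conjTranspose, Matrix.mul_assoc]
      _ = Vᴴ * (Aᴴ * A * V) := by rw [hV, Matrix.mul_one]; simp only [Matrix.mul_assoc]
  have h2 : Aᴴ * A * V * Vᴴ = Aᴴ * A := by rw [Matrix.mul_assoc, hV, Matrix.mul_one]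
  rw [frob_eq, h1, rtrace_comm, h2, ← frob_eq]

lemma sum_pair_support {M : Type*} [AddCommMonoid M] {n : ℕ} {k l : Fin n} (hkl : k ≠ l)
    (f : Fin n → M) (hf : ∀ x, x ≠ k → x ≠ l → f x = 0) :
    ∑ x, f x = f k + f l := by
  rw [← Finset.sum_pair hkl]
  refine (Finset.sum_subset (Finset.subset_univ _) ?_).symm
  intro x _ hx
  simp only [Finset.mem_insert, Finset.mem_singleton, not_or] at hx
  exact hf x hx.1 hx.2

lemma sum_ite_ne {n : ℕ} (i : Fin n) (x : Fin n → ℝ) :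
    (∑ j, if i ≠ j then x j else 0) = (∑ j, x j) - x i := by
  have h := Finset.sum_ite_eq (Finset.univ : Finset (Fin n)) i x
  calc (∑ j, if i ≠ j then x j else 0)
      = ∑ j, (x j - if i = j then x j else 0) := by
        refine Finset.sum_congr rfl fun j _ => ?_
        by_cases h : i = j <;> simp [h]
    _ = (∑ j, x j) - x i := by
        rw [Finset.sum_sub_distrib, h]; simp

lemma Nq_eq {n : ℕ} (A : Matrix (Fin n) (Fin n) (Quaternion ℝ)) :
    Nq A = frob A - ∑ i, ‖A i i‖ ^ 2 := by
  simp only [Nq, frob, ← Finset.sum_sub_distrib]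
  exact Finset.sum_congr rfl fun i _ => sum_ite_ne i _

end NqAux

open NqAux

/-- Theorem 3.5 (second part): eliminating a maximal-magnitude off-diagonal pair of a
quaternion Hermitian matrix by a unitary matrix supported on the `{k,l}` block gives
`N(P) = N(Q) − |Q_kl|² − |Q_lk|² ≤ (1 − 2/(n(n−1))) N(Q)`. -/
theorem Nq_givens_elimination (n : ℕ) (hn : 2 ≤ n)
    (Q J : Matrix (Fin n) (Fin n) (Quaternion ℝ))
    (hQ : Qᴴ = Q) (k l : Fin n) (hkl : k ≠ l)
    (hmax : ∀ i j, i ≠ j → ‖Q i j‖ ≤ ‖Q k l‖)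
    (hJu : Jᴴ * J = 1) (hJu' : J * Jᴴ = 1)
    (hJd : ∀ i, i ≠ k → i ≠ l → J i i = 1)
    (hJo : ∀ i j, i ≠ j → (i, j) ≠ (k, l) → (i, j) ≠ (l, k) → J i j = 0)
    (hPkl : (Jᴴ * Q * J) k l = 0) (hPlk : (Jᴴ * Q * J) l k = 0) :
    Nq (Jᴴ * Q * J) = Nq Q - ‖Q k l‖ ^ 2 - ‖Q l k‖ ^ 2 ∧
    Nq (Jᴴ * Q * J) ≤ (1 - 2 / ((n : ℝ) * ((n : ℝ) - 1))) * Nq Q := by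
  set P := Jᴴ * Q * J with hP
  -- column support of J
  have hJcol : ∀ x c : Fin n, x ≠ k → x ≠ l → (c = k ∨ c = l) → J x c = 0 := by
    intro x c hx1 hx2 hc
    rcases hc with rfl | rfl
    · exact hJo x c hx1 (by simp [Prod.ext_iff, hx1]) (by simp [Prod.ext_iff, hx2])
    · exact hJo x c hx2 (by simp [Prod.ext_iff, hx1]) (by simp [Prod.ext_iff, hx2])
  have hJrow : ∀ r c : Fin n, (r = k ∨ r = l) → c ≠ k → c ≠ l → J r c = 0 := by
    intro r c hr hc1 hc2
    rcases hr with rfl | rfl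
    · exact hJo r c (Ne.symm hc1) (by simp [Prod.ext_iff, hc2]) (by simp [Prod.ext_iff, hc1])
    · exact hJo r c (Ne.symm hc2) (by simp [Prod.ext_iff, hc2]) (by simp [Prod.ext_iff, hc1])
  -- column i of J for i ∉ {k,l} is e_i
  have hJcol' : ∀ x i : Fin n, i ≠ k → i ≠ l → x ≠ i → J x i = 0 := by
    intro x i hik hil hx
    exact hJo x i hx (by simp [Prod.ext_iff]; intro _; exact hil)
      (by simp [Prod.ext_iff]; intro _; exact hik)
  -- P agrees with Q on the diagonal outside {k,l}
  have hPd : ∀ i : Fin n, i ≠ k → i ≠ l → P i i = Q i i := by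
    intro i hik hil
    show (Jᴴ * Q * J) i i = Q i i
    simp only [mul_apply, conjTranspose_apply]
    rw [Finset.sum_eq_single i (fun b _ hb => by rw [hJcol' b i hik hil hb, mul_zero])
      (by simp), hJd i hik hil, mul_one,
      Finset.sum_eq_single i (fun a _ ha => by rw [hJcol' a i hik hil ha, star_zero, zero_mul])
      (by simp), hJd i hik hil, star_one, one_mul]
  -- the 2×2 block
  set e : Fin 2 → Fin n := ![k, l] with he
  have he0 : e 0 = k := rfl
  have he1 : e 1 = l := rfl
  set U := J.submatrix e e with hU
  -- the block of P is the conjugation of the block of Q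
  have hBp : P.submatrix e e = Uᴴ * Q.submatrix e e * U := by
    refine Matrix.ext fun a b => ?_
    have hea : e a = k ∨ e a = l := by fin_cases a <;> simp [he]
    have heb : e b = k ∨ e b = l := by fin_cases b <;> simp [he]
    show (Jᴴ * Q * J) (e a) (e b) = _
    simp only [hU, mul_apply, conjTranspose_apply, submatrix_apply, Fin.sum_univ_two, he0, he1]
    rw [sum_pair_support hkl _
        (fun y hy1 hy2 => by rw [hJcol y (e b) hy1 hy2 heb, mul_zero]),
      sum_pair_support hkl _
        (fun x h1 h2 => by rw [hJcol x (e a) h1 h2 hea, star_zero, zero_mul]),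
      sum_pair_support hkl _
        (fun x h1 h2 => by rw [hJcol x (e a) h1 h2 hea, star_zero, zero_mul])]
  -- U is (co)unitary
  have hUU : ∀ a b : Fin n, (a = k ∨ a = l) →
      J a k * star (J b k) + J a l * star (J b l) = if a = b then 1 else 0 := by
    intro a b ha
    have h := congrFun (congrFun hJu' a) b
    simp only [mul_apply, conjTranspose_apply] at h
    rw [sum_pair_support hkl _
      (fun x h1 h2 => by rw [hJrow a x ha h1 h2, zero_mul])] at h
    rwa [one_apply] at h
  have hU' : U * Uᴴ = 1 := by
    refine Matrix.ext fun a b => ?_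
    have hea : e a = k ∨ e a = l := by fin_cases a <;> simp [he]
    have hei : e a = e b ↔ a = b := by
      fin_cases a <;> fin_cases b <;> simp [he, hkl, hkl.symm]
    have h := hUU (e a) (e b) hea
    simp only [hU, mul_apply, conjTranspose_apply, submatrix_apply, Fin.sum_univ_two, he0, he1]
    rw [h, one_apply]
    simp [hei]
  -- Frobenius invariances
  have E3 : frob P = frob Q := frob_conj J Q hJu'
  have Eblock : frob (P.submatrix e e) = frob (Q.submatrix e e) := by
    rw [hBp]; exact frob_conj U _ hU'
  have E5 : ‖P k k‖ ^ 2 + ‖P l l‖ ^ 2 =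
      ‖Q k k‖ ^ 2 + ‖Q k l‖ ^ 2 + ‖Q l k‖ ^ 2 + ‖Q l l‖ ^ 2 := by
    have h := Eblock
    simp only [frob, Fin.sum_univ_two, submatrix_apply, he0, he1] at h
    rw [show P k l = 0 from hPkl, show P l k = 0 from hPlk] at h
    simp only [norm_zero] at h
    linarith
  -- diagonal sums
  have E4 : (∑ i, ‖P i i‖ ^ 2) - (∑ i, ‖Q i i‖ ^ 2) =
      (‖P k k‖ ^ 2 - ‖Q k k‖ ^ 2) + (‖P l l‖ ^ 2 - ‖Q l l‖ ^ 2) := by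
    rw [← Finset.sum_sub_distrib]
    exact sum_pair_support hkl _ (fun i h1 h2 => by rw [hPd i h1 h2, sub_self])
  have E1 : Nq P = frob P - ∑ i, ‖P i i‖ ^ 2 := Nq_eq P
  have E2 : Nq Q = frob Q - ∑ i, ‖Q i i‖ ^ 2 := Nq_eq Q
  have heq : Nq P = Nq Q - ‖Q k l‖ ^ 2 - ‖Q l k‖ ^ 2 := by linarith
  refine ⟨heq, ?_⟩
  -- inequality part
  have hlk : ‖Q l k‖ = ‖Q k l‖ := by
    have : Q l k = star (Q k l) := by
      conv_lhs => rw [← hQ]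
      rfl
    rw [this, norm_star]
  have hc : (0:ℝ) ≤ ‖Q k l‖ ^ 2 := sq_nonneg _
  have hD : (0:ℝ) < (n : ℝ) * ((n : ℝ) - 1) := by
    have hn2 : (2:ℝ) ≤ (n:ℝ) := by exact_mod_cast hn
    nlinarith
  have hNle : Nq Q ≤ (n : ℝ) * ((n : ℝ) - 1) * ‖Q k l‖ ^ 2 := by
    have h1 : Nq Q ≤ ∑ i : Fin n, ∑ j : Fin n, (if i ≠ j then ‖Q k l‖ ^ 2 else 0) := by
      refine Finset.sum_le_sum fun i _ => Finset.sum_le_sum fun j _ => ?_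
      by_cases h : i = j
      · simp [h]
      · simp only [h, ne_eq, not_false_eq_true, if_true]
        exact pow_le_pow_left₀ (norm_nonneg _) (hmax i j h) 2
    have h2 : ∑ i : Fin n, ∑ j : Fin n, (if i ≠ j then ‖Q k l‖ ^ 2 else 0) =
        (n : ℝ) * ((n : ℝ) - 1) * ‖Q k l‖ ^ 2 := by
      have h3 : ∀ i : Fin n, (∑ j : Fin n, if i ≠ j then ‖Q k l‖ ^ 2 else 0) =
          ((n : ℝ) - 1) * ‖Q k l‖ ^ 2 := by
        intro i
        rw [sum_ite_ne i (fun _ => ‖Q k l‖ ^ 2), Finset.sum_const, Finset.card_univ,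
          Fintype.card_fin, nsmul_eq_mul]
        ring
      simp only [h3, Finset.sum_const, Finset.card_univ, Fintype.card_fin, nsmul_eq_mul]
      ring
    linarith
  rw [heq, hlk]
  have hkey : 2 / ((n : ℝ) * ((n : ℝ) - 1)) * Nq Q ≤ 2 * ‖Q k l‖ ^ 2 := by
    have h4 : 2 / ((n : ℝ) * ((n : ℝ) - 1)) * ((n : ℝ) * ((n : ℝ) - 1) * ‖Q k l‖ ^ 2)
        = 2 * ‖Q k l‖ ^ 2 := by
      rw [← mul_assoc, div_mul_cancel₀ _ hD.ne']
    calc 2 / ((n : ℝ) * ((n : ℝ) - 1)) * Nq Q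
        ≤ 2 / ((n : ℝ) * ((n : ℝ) - 1)) * ((n : ℝ) * ((n : ℝ) - 1) * ‖Q k l‖ ^ 2) := by
          exact mul_le_mul_of_nonneg_left hNle (by positivity)
      _ = 2 * ‖Q k l‖ ^ 2 := h4
  nlinarith [hkey]

end
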